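/- (GHZ sculpting operator generates the N-partite GHZ state.) Let N ≥ 2 and consider modes indexed by j ∈ ZMod N, each with internal levels + and − (variables X_{j,±}). Then applying the operator ∏_{j ∈ ZMod N} ( a_{j,0} − a_{j+1,1} ) to the initial state ∏_{j ∈ ZMod N} X_{j,+}X_{j,−} yields ∏_j a†_{j,0}·1 + ∏_j a†_{j,1}·1 = 2^{−N/2}·[ ∏_{j}(X_{j,+}+X_{j,−}) + ∏_{j}(X_{j,+}−X_{j,−}) ], which encodes the N-qubit GHZ state |0…0⟩ + |1…1⟩. -/

import Mathlib

open MvPolynomial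

/-- Partial derivatives on a multivariate polynomial ring commute. -/
lemma pderiv_comm' {σ : Type*} (i j : σ) (p : MvPolynomial σ ℂ) :
    pderiv i (pderiv j p) = pderiv j (pderiv i p) := by
  induction p using MvPolynomial.induction_on with
  | C a => simp
  | add p q hp hq => simp [hp, hq]
  | mul_X p n hp => classical
                  simp only [pderiv_mul, pderiv_X, map_add, hp, Pi.single_apply, apply_ite,
                    map_one, map_zero, mul_ite, ite_mul, mul_one, one_mul, mul_zero, zero_mul]
                  split <;> split <;> ring

/-- The sculpting operator factor `a_{j,0} − a_{j+1,1}` acting on the Bargmann–Fock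
space of `N` modes, each with internal levels `+` (second index `0`) and `−`
(second index `1`): `a_{j,0} = (a_{j,+} + a_{j,−})/√2`, `a_{j,1} = (a_{j,+} − a_{j,−})/√2`,
with annihilation operators realized as partial derivatives. -/
noncomputable def sculptGHZ (N : ℕ) (j : ZMod N) :
    Module.End ℂ (MvPolynomial (ZMod N × Fin 2) ℂ) :=
  (Real.sqrt 2 : ℂ)⁻¹ •
    (((pderiv ((j, 0) : ZMod N × Fin 2)).toLinearMap +
        (pderiv ((j, 1) : ZMod N × Fin 2)).toLinearMap) -
      ((pderiv ((j + 1, 0) : ZMod N × Fin 2)).toLinearMap -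
        (pderiv ((j + 1, 1) : ZMod N × Fin 2)).toLinearMap))

/-- The factors of the GHZ sculpting operator are commuting operators (they are
constant-coefficient differential operators), so their product is well defined. -/
lemma sculptGHZ_commute (N : ℕ) (j k : ZMod N) :
    Commute (sculptGHZ N j) (sculptGHZ N k) := by
  have hd : ∀ x y : ZMod N × Fin 2,
      Commute ((pderiv x).toLinearMap : Module.End ℂ (MvPolynomial (ZMod N × Fin 2) ℂ))
        (pderiv y).toLinearMap := by
    intro x y
    refine LinearMap.ext fun p => ?_
    simpa [Module.End.mul_apply] using pderiv_comm' x y p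
  have hA : ∀ (a : ZMod N) (y : ZMod N × Fin 2),
      Commute (((pderiv ((a, 0) : ZMod N × Fin 2)).toLinearMap +
          (pderiv ((a, 1) : ZMod N × Fin 2)).toLinearMap) -
        ((pderiv ((a + 1, 0) : ZMod N × Fin 2)).toLinearMap -
          (pderiv ((a + 1, 1) : ZMod N × Fin 2)).toLinearMap))
        ((pderiv y).toLinearMap : Module.End ℂ (MvPolynomial (ZMod N × Fin 2) ℂ)) := fun a y =>
    ((hd _ y).add_left (hd _ y)).sub_left ((hd _ y).sub_left (hd _ y))
  have hAA : Commute
      (((pderiv ((j, 0) : ZMod N × Fin 2)).toLinearMap +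
          (pderiv ((j, 1) : ZMod N × Fin 2)).toLinearMap) -
        ((pderiv ((j + 1, 0) : ZMod N × Fin 2)).toLinearMap -
          (pderiv ((j + 1, 1) : ZMod N × Fin 2)).toLinearMap))
      (((pderiv ((k, 0) : ZMod N × Fin 2)).toLinearMap +
          (pderiv ((k, 1) : ZMod N × Fin 2)).toLinearMap) -
        ((pderiv ((k + 1, 0) : ZMod N × Fin 2)).toLinearMap -
          (pderiv ((k + 1, 1) : ZMod N × Fin 2)).toLinearMap)) :=
    ((hA j _).add_right (hA j _)).sub_right ((hA j _).sub_right (hA j _))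
  exact (hAA.smul_left ((Real.sqrt 2 : ℂ)⁻¹)).smul_right ((Real.sqrt 2 : ℂ)⁻¹)

namespace GHZaux


open Finset

set_option linter.unusedSectionVars false

variable {N : ℕ} [NeZero N]

noncomputable abbrev Pol (N : ℕ) := MvPolynomial (ZMod N × Fin 2) ℂ

noncomputable def D (N : ℕ) (v : ZMod N × Fin 2) : Module.End ℂ (Pol N) :=
  (pderiv v).toLinearMap

lemma D_comm (u v : ZMod N × Fin 2) : D N u * D N v = D N v * D N u := by
  refine LinearMap.ext fun p => ?_
  simpa [D, Module.End.mul_apply] using pderiv_comm' u v p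

/-- The commutative subalgebra generated by the partial derivative operators. -/
noncomputable def AA (N : ℕ) : Subalgebra ℂ (Module.End ℂ (Pol N)) :=
  Algebra.adjoin ℂ (Set.range (D N))

noncomputable instance : CommRing (AA N) :=
  Algebra.adjoinCommRingOfComm ℂ (by
    rintro a ⟨u, rfl⟩ b ⟨v, rfl⟩
    exact D_comm u v)

lemma commE (x y : AA N) :
    Commute (x : Module.End ℂ (Pol N)) (y : Module.End ℂ (Pol N)) := by
  have h : ((x * y : AA N) : Module.End ℂ (Pol N)) = ((y * x : AA N) : _) := by
    exact congrArg Subtype.val (mul_comm x y)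
  simpa [Commute, SemiconjBy] using h

lemma val_prod (F : Finset (ZMod N)) (f : ZMod N → AA N) :
    ((∏ k ∈ F, f k : AA N) : Module.End ℂ (Pol N)) =
      F.noncommProd (fun k => ((f k : Module.End ℂ (Pol N))))
        (fun _ _ _ _ _ => commE _ _) := by
  classical
  induction F using Finset.induction with
  | empty => rw [Finset.prod_empty]; exact (Finset.noncommProd_empty _ _).symm
  | insert _ _ ha ih =>
      rw [Finset.prod_insert ha]; erw [Finset.noncommProd_insert_of_notMem _ _ _ _ ha]
      erw [← ih]
      rfl

/-- Local mode polynomials. -/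
noncomputable def xy (k : ZMod N) : Pol N := X (k, 0) * X (k, 1)
noncomputable def pl (k : ZMod N) : Pol N := X (k, 0) + X (k, 1)
noncomputable def mn (k : ZMod N) : Pol N := X (k, 0) - X (k, 1)

lemma pd_xy {k m : ZMod N} (ε : Fin 2) (h : m ≠ k) :
    pderiv ((k, ε) : ZMod N × Fin 2) (xy m) = 0 := by
  have h0 : ((m, 0) : ZMod N × Fin 2) ≠ (k, ε) := by simp [Prod.ext_iff, h]
  have h1 : ((m, 1) : ZMod N × Fin 2) ≠ (k, ε) := by simp [Prod.ext_iff, h]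
  simp [xy, pderiv_mul, pderiv_X_of_ne h0, pderiv_X_of_ne h1]

lemma pd_pl {k m : ZMod N} (ε : Fin 2) (h : m ≠ k) :
    pderiv ((k, ε) : ZMod N × Fin 2) (pl m) = 0 := by
  have h0 : ((m, 0) : ZMod N × Fin 2) ≠ (k, ε) := by simp [Prod.ext_iff, h]
  have h1 : ((m, 1) : ZMod N × Fin 2) ≠ (k, ε) := by simp [Prod.ext_iff, h]
  simp [pl, pderiv_X_of_ne h0, pderiv_X_of_ne h1]

lemma pd_mn {k m : ZMod N} (ε : Fin 2) (h : m ≠ k) :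
    pderiv ((k, ε) : ZMod N × Fin 2) (mn m) = 0 := by
  have h0 : ((m, 0) : ZMod N × Fin 2) ≠ (k, ε) := by simp [Prod.ext_iff, h]
  have h1 : ((m, 1) : ZMod N × Fin 2) ≠ (k, ε) := by simp [Prod.ext_iff, h]
  simp [mn, pderiv_X_of_ne h0, pderiv_X_of_ne h1]

lemma pd_xy0 (k : ZMod N) : pderiv ((k, 0) : ZMod N × Fin 2) (xy k) = X (k, 1) := by
  have h1 : ((k, 1) : ZMod N × Fin 2) ≠ (k, 0) := by simp
  simp [xy, pderiv_mul, pderiv_X_of_ne h1]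

lemma pd_xy1 (k : ZMod N) : pderiv ((k, 1) : ZMod N × Fin 2) (xy k) = X (k, 0) := by
  have h0 : ((k, 0) : ZMod N × Fin 2) ≠ (k, 1) := by simp
  simp [xy, pderiv_mul, pderiv_X_of_ne h0]

lemma pd_mn0 (k : ZMod N) : pderiv ((k, 0) : ZMod N × Fin 2) (mn k) = 1 := by
  have h1 : ((k, 1) : ZMod N × Fin 2) ≠ (k, 0) := by simp
  simp [mn, pderiv_X_of_ne h1]

lemma pd_mn1 (k : ZMod N) : pderiv ((k, 1) : ZMod N × Fin 2) (mn k) = -1 := by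
  have h0 : ((k, 0) : ZMod N × Fin 2) ≠ (k, 1) := by simp
  simp [mn, pderiv_X_of_ne h0]

lemma pd_prod_zero {v : ZMod N × Fin 2} {T : Finset (ZMod N)} {q : ZMod N → Pol N}
    (h : ∀ k ∈ T, pderiv v (q k) = 0) : pderiv v (∏ k ∈ T, q k) = 0 := by
  classical
  induction T using Finset.induction with
  | empty => simp
  | insert _ _ ha ih =>
      rw [Finset.prod_insert ha, pderiv_mul, h _ (mem_insert_self _ _),
        ih fun k hk => h k (mem_insert_of_mem hk)]
      simp

lemma pd_factor {v : ZMod N × Fin 2} {c q : Pol N} (hc : pderiv v c = 0) :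
    pderiv v (c * q) = c * pderiv v q := by
  rw [pderiv_mul, hc]; ring

noncomputable def QQ (T : Finset (ZMod N)) : Pol N :=
  (∏ k ∈ T, mn k) * ∏ k ∈ Tᶜ, xy k

noncomputable def RR (S T : Finset (ZMod N)) : Pol N :=
  (∏ k ∈ S, pl k) * ((∏ k ∈ T, mn k) * ∏ k ∈ (S ∪ T)ᶜ, xy k)

noncomputable def bE (N : ℕ) (k : ZMod N) : Module.End ℂ (Pol N) :=
  D N (k, 0) + D N (k, 1)

noncomputable def cE (N : ℕ) (k : ZMod N) : Module.End ℂ (Pol N) :=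
  D N (k, 1) - D N (k, 0)

lemma D_apply (v : ZMod N × Fin 2) (p : Pol N) : D N v p = pderiv v p := rfl

lemma cE_apply (k : ZMod N) (p : Pol N) :
    cE N k p = pderiv ((k,1) : ZMod N × Fin 2) p - pderiv ((k,0) : ZMod N × Fin 2) p := rfl

lemma bE_apply (k : ZMod N) (p : Pol N) :
    bE N k p = pderiv ((k,0) : ZMod N × Fin 2) p + pderiv ((k,1) : ZMod N × Fin 2) p := rfl

lemma Cstep {a : ZMod N} {T : Finset (ZMod N)} (ha : a ∉ T) :
    cE N a (QQ T) = QQ (insert a T) := by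
  classical
  have hmem : a ∈ Tᶜ := by simpa using ha
  have h1 : QQ T = ((∏ k ∈ T, mn k) * ∏ k ∈ Tᶜ.erase a, xy k) * xy a := by
    rw [QQ, ← Finset.mul_prod_erase _ _ hmem]; ring
  have hc : ∀ ε : Fin 2, pderiv ((a, ε) : ZMod N × Fin 2)
      ((∏ k ∈ T, mn k) * ∏ k ∈ Tᶜ.erase a, xy k) = 0 := by
    intro ε
    rw [pderiv_mul,
      pd_prod_zero (fun k hk => pd_mn ε (by rintro rfl; exact ha hk)),
      pd_prod_zero (fun k hk => pd_xy ε (Finset.ne_of_mem_erase hk))]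
    ring
  have : cE N a (QQ T) =
      ((∏ k ∈ T, mn k) * ∏ k ∈ Tᶜ.erase a, xy k) * mn a := by
    rw [h1, cE_apply, pd_factor (hc 1), pd_factor (hc 0), pd_xy1, pd_xy0, ← mul_sub, mn]
  rw [this, QQ, Finset.prod_insert ha, Finset.compl_insert]
  ring

lemma Bstep1 {a : ZMod N} {S T : Finset (ZMod N)} (haS : a ∉ S) (haT : a ∉ T) :
    bE N a (RR S T) = RR (insert a S) T := by
  classical
  have hmem : a ∈ (S ∪ T)ᶜ := by simp [haS, haT]
  have h1 : RR S T =
      ((∏ k ∈ S, pl k) * ((∏ k ∈ T, mn k) * ∏ k ∈ ((S ∪ T)ᶜ).erase a, xy k)) * xy a := by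
    rw [RR, ← Finset.mul_prod_erase _ _ hmem]; ring
  have hc : ∀ ε : Fin 2, pderiv ((a, ε) : ZMod N × Fin 2)
      ((∏ k ∈ S, pl k) * ((∏ k ∈ T, mn k) * ∏ k ∈ ((S ∪ T)ᶜ).erase a, xy k)) = 0 := by
    intro ε
    rw [pderiv_mul, pderiv_mul,
      pd_prod_zero (fun k hk => pd_pl ε (by rintro rfl; exact haS hk)),
      pd_prod_zero (fun k hk => pd_mn ε (by rintro rfl; exact haT hk)),
      pd_prod_zero (fun k hk => pd_xy ε (Finset.ne_of_mem_erase hk))]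
    ring
  have h2 : bE N a (RR S T) =
      ((∏ k ∈ S, pl k) * ((∏ k ∈ T, mn k) * ∏ k ∈ ((S ∪ T)ᶜ).erase a, xy k)) * pl a := by
    rw [h1, bE_apply, pd_factor (hc 0), pd_factor (hc 1), pd_xy0, pd_xy1, ← mul_add, pl,
      add_comm (X (a,0) : Pol N)]
  rw [h2, RR, Finset.prod_insert haS, Finset.insert_union, Finset.compl_insert]
  ring

lemma Bstep0 {a : ZMod N} {S T : Finset (ZMod N)} (haS : a ∉ S) (haT : a ∈ T) :
    bE N a (RR S T) = 0 := by
  classical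
  have h1 : RR S T =
      ((∏ k ∈ S, pl k) * ((∏ k ∈ T.erase a, mn k) * ∏ k ∈ (S ∪ T)ᶜ, xy k)) * mn a := by
    rw [RR, ← Finset.mul_prod_erase _ _ haT]; ring
  have hc : ∀ ε : Fin 2, pderiv ((a, ε) : ZMod N × Fin 2)
      ((∏ k ∈ S, pl k) * ((∏ k ∈ T.erase a, mn k) * ∏ k ∈ (S ∪ T)ᶜ, xy k)) = 0 := by
    intro ε
    rw [pderiv_mul, pderiv_mul,
      pd_prod_zero (fun k hk => pd_pl ε (by rintro rfl; exact haS hk)),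
      pd_prod_zero (fun k hk => pd_mn ε (Finset.ne_of_mem_erase hk)),
      pd_prod_zero (fun k hk => pd_xy ε (by rintro rfl; simp [haT] at hk))]
    ring
  have h2 : bE N a (RR S T) =
      ((∏ k ∈ S, pl k) * ((∏ k ∈ T.erase a, mn k) * ∏ k ∈ (S ∪ T)ᶜ, xy k)) * (1 + (-1)) := by
    rw [h1, bE_apply, pd_factor (hc 0), pd_factor (hc 1), pd_mn0, pd_mn1, ← mul_add]
  rw [h2]; ring




set_option linter.unusedSectionVars false

variable {N : ℕ} [NeZero N]

lemma bE_mem (k : ZMod N) : bE N k ∈ AA N :=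
  add_mem (Algebra.subset_adjoin ⟨_, rfl⟩) (Algebra.subset_adjoin ⟨_, rfl⟩)

lemma cE_mem (k : ZMod N) : cE N k ∈ AA N :=
  sub_mem (Algebra.subset_adjoin ⟨_, rfl⟩) (Algebra.subset_adjoin ⟨_, rfl⟩)

open Finset

lemma applyC (F : Finset (ZMod N)) :
    (F.noncommProd (fun j => cE N (j + 1))
        (fun j _ k _ _ => commE ⟨cE N (j + 1), cE_mem _⟩ ⟨cE N (k + 1), cE_mem _⟩))
      (QQ (∅ : Finset (ZMod N))) = QQ (F.image (· + 1)) := by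
  classical
  induction F using Finset.induction with
  | empty => erw [Finset.noncommProd_empty]; rfl
  | @insert a F ha ih =>
      erw [Finset.noncommProd_insert_of_notMem _ _ _ _ ha]; rw [ Module.End.mul_apply, ih,
        Finset.image_insert]
      refine Cstep ?_
      simp only [Finset.mem_image]
      rintro ⟨x, hx, hxa⟩
      rw [add_right_cancel hxa] at hx
      exact ha hx

lemma applyB (T : Finset (ZMod N)) (S : Finset (ZMod N)) :
    (S.noncommProd (fun k => bE N k)
        (fun j _ k _ _ => commE ⟨bE N j, bE_mem _⟩ ⟨bE N k, bE_mem _⟩))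
      (QQ T) = if (S ∩ T).Nonempty then 0 else RR S T := by
  classical
  induction S using Finset.induction with
  | empty => erw [Finset.noncommProd_empty]; simp [QQ, RR]
  | @insert a S ha ih =>
      erw [Finset.noncommProd_insert_of_notMem _ _ _ _ ha]; rw [Module.End.mul_apply, ih]
      by_cases h : (S ∩ T).Nonempty
      · rw [if_pos h, map_zero, if_pos (h.mono (Finset.inter_subset_inter
          (Finset.subset_insert a S) (le_refl T)))]
      · rw [if_neg h]
        by_cases haT : a ∈ T
        · rw [Bstep0 ha haT, if_pos ⟨a, Finset.mem_inter.2 ⟨Finset.mem_insert_self _ _, haT⟩⟩]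
        · rw [Bstep1 ha haT, Finset.insert_inter_of_notMem haT, if_neg h]

lemma zmod_invariant {F : Finset (ZMod N)} (h : ∀ x ∈ F, x + 1 ∈ F) :
    F = ∅ ∨ F = Finset.univ := by
  rcases F.eq_empty_or_nonempty with h0 | ⟨x₀, hx₀⟩
  · exact Or.inl h0
  right
  have key : ∀ n : ℕ, x₀ + (n : ZMod N) ∈ F := by
    intro n
    induction n with
    | zero => simpa using hx₀
    | succ n ih => push_cast; rw [← add_assoc]; exact h _ ih
  refine Finset.eq_univ_iff_forall.2 fun y => ?_
  have h2 := key (y - x₀).val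
  rwa [ZMod.natCast_rightInverse (y - x₀), show x₀ + (y - x₀) = y from by ring] at h2

lemma TS_eq (S : Finset (ZMod N))
    (hdisj : ¬ (S ∩ (Finset.univ \ S).image (· + 1)).Nonempty) :
    S = ∅ ∨ S = Finset.univ := by
  classical
  set T : Finset (ZMod N) := (Finset.univ \ S).image (· + 1) with hT
  have hsub : T ⊆ Sᶜ := by
    intro x hx
    rw [Finset.mem_compl]
    intro hxS
    exact hdisj ⟨x, Finset.mem_inter.2 ⟨hxS, hx⟩⟩
  have hcard : Sᶜ.card ≤ T.card := by
    rw [hT, Finset.card_image_of_injective _ (add_left_injective 1),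
      ← Finset.compl_eq_univ_sdiff]
  have hTc : T = Sᶜ := Finset.eq_of_subset_of_card_le hsub hcard
  have hinv : ∀ x ∈ Sᶜ, x + 1 ∈ Sᶜ := by
    intro x hx
    rw [← hTc, hT]
    exact Finset.mem_image.2 ⟨x, by rwa [← Finset.compl_eq_univ_sdiff], rfl⟩
  rcases zmod_invariant hinv with h | h
  · exact Or.inr (by simpa [Finset.compl_eq_empty_iff] using h)
  · exact Or.inl (by simpa [Finset.compl_eq_univ_iff] using h)




set_option linter.unusedSectionVars false

variable {N : ℕ} [NeZero N]

open Finset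

lemma prod_smul_alg {B : Type*} [CommRing B] [Algebra ℂ B] (r : ℂ) (f : ZMod N → B) :
    ∏ j : ZMod N, (r • f j) = r ^ N • ∏ j : ZMod N, f j := by
  simp only [Algebra.smul_def]
  rw [Finset.prod_mul_distrib, Finset.prod_const, ← map_pow, Finset.card_univ, ZMod.card]

noncomputable def bA (k : ZMod N) : AA N := ⟨bE N k, bE_mem k⟩
noncomputable def cA (k : ZMod N) : AA N := ⟨cE N (k + 1), cE_mem _⟩

lemma hg (j : ZMod N) :
    (((((Real.sqrt 2 : ℂ)⁻¹ • (bA j + cA j)) : AA N)) : Module.End ℂ (Pol N)) =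
      sculptGHZ N j := by
  have h1 : (((((Real.sqrt 2 : ℂ)⁻¹ • (bA j + cA j)) : AA N)) : Module.End ℂ (Pol N)) =
      (Real.sqrt 2 : ℂ)⁻¹ • (bE N j + cE N (j + 1)) := rfl
  rw [h1, sculptGHZ]
  refine congrArg ((Real.sqrt 2 : ℂ)⁻¹ • ·) ?_
  show (D N (j, 0) + D N (j, 1)) + (D N (j + 1, 1) - D N (j + 1, 0)) = _
  unfold D
  abel


lemma applyC' (F : Finset (ZMod N)) :
    (F.noncommProd (fun j => ((cA j : AA N) : Module.End ℂ (Pol N)))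
        (fun _ _ _ _ _ => commE _ _)) (QQ (∅ : Finset (ZMod N))) = QQ (F.image (· + 1)) :=
  applyC F

lemma applyB' (T : Finset (ZMod N)) (S : Finset (ZMod N)) :
    (S.noncommProd (fun k => ((bA k : AA N) : Module.End ℂ (Pol N)))
        (fun _ _ _ _ _ => commE _ _)) (QQ T) =
      if (S ∩ T).Nonempty then 0 else RR S T :=
  applyB T S

set_option synthInstance.maxHeartbeats 400000 in
set_option maxHeartbeats 1000000 in
lemma key (N : ℕ) [NeZero N] :
    (Finset.univ.noncommProd (fun j : ZMod N => sculptGHZ N j)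
        (fun j _ k _ _ => sculptGHZ_commute N j k))
      (∏ j : ZMod N, xy j) =
    ((Real.sqrt 2 : ℂ)⁻¹) ^ N • ((∏ j : ZMod N, mn j) + ∏ j : ZMod N, pl j) := by
  classical
  have h2 : (Finset.univ.noncommProd (fun j : ZMod N => sculptGHZ N j)
        (fun j _ k _ _ => sculptGHZ_commute N j k)) =
      Finset.univ.noncommProd
        (fun j : ZMod N => ((((Real.sqrt 2 : ℂ)⁻¹ • (bA j + cA j) : AA N)) : Module.End ℂ (Pol N)))
        (fun _ _ _ _ _ => commE _ _) :=
    Finset.noncommProd_congr rfl (fun j _ => (hg j).symm) _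
  have hA := h2.trans
    (val_prod Finset.univ (fun j : ZMod N => (Real.sqrt 2 : ℂ)⁻¹ • (bA j + cA j))).symm
  rw [hA]
  erw [@prod_smul_alg N _ (AA N) _ (AA N).algebra]
  rw [Finset.prod_add]
  have hQ : QQ (∅ : Finset (ZMod N)) = ∏ j : ZMod N, xy j := by
    simp [QQ]
  have hterm : ∀ t : Finset (ZMod N),
      ((((∏ i ∈ t, bA i) * ∏ i ∈ Finset.univ \ t, cA i : AA N)) : Module.End ℂ (Pol N))
        (∏ j : ZMod N, xy j) =
      if (t ∩ ((Finset.univ \ t).image (· + 1))).Nonempty then 0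
        else RR t ((Finset.univ \ t).image (· + 1)) := by
    intro t
    rw [MulMemClass.coe_mul, Module.End.mul_apply, val_prod, val_prod, ← hQ, applyC', applyB']
  have hsum : ((((∑ t ∈ Finset.univ.powerset,
        (∏ i ∈ t, bA i) * ∏ i ∈ Finset.univ \ t, cA i : AA N)) : Module.End ℂ (Pol N)))
        (∏ j : ZMod N, xy j) =
      ∑ t ∈ Finset.univ.powerset,
        (if (t ∩ ((Finset.univ \ t).image (· + 1))).Nonempty then 0
          else RR t ((Finset.univ \ t).image (· + 1))) := by
    rw [AddSubmonoidClass.coe_finset_sum, LinearMap.sum_apply]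
    exact Finset.sum_congr rfl fun t _ => hterm t
  rw [SetLike.val_smul, LinearMap.smul_apply]
  erw [hsum]
  have hpair : ({∅, Finset.univ} : Finset (Finset (ZMod N))) ⊆ Finset.univ.powerset := by
    intro t ht
    simpa [Finset.mem_powerset] using Finset.subset_univ t
  rw [← Finset.sum_subset hpair (fun t _ ht => by
    rw [if_pos]
    by_contra hcon
    rcases TS_eq t hcon with h | h <;> simp [h] at ht)]
  have hne : (∅ : Finset (ZMod N)) ≠ Finset.univ := by
    have : (Finset.univ : Finset (ZMod N)).Nonempty := Finset.univ_nonempty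
    exact fun h => this.ne_empty h.symm
  rw [Finset.sum_pair hne]
  have himg : ((Finset.univ \ (∅ : Finset (ZMod N))).image (· + 1)) = Finset.univ := by
    apply Finset.eq_univ_of_card
    rw [Finset.card_image_of_injective _ (add_left_injective 1)]
    simp
  have hempty : (if ((∅ : Finset (ZMod N)) ∩
        ((Finset.univ \ (∅ : Finset (ZMod N))).image (· + 1))).Nonempty then 0
      else RR (∅ : Finset (ZMod N)) ((Finset.univ \ (∅ : Finset (ZMod N))).image (· + 1))) =
      ∏ j : ZMod N, mn j := by
    rw [if_neg (by simp), himg]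
    simp [RR]
  have huniv : (if ((Finset.univ : Finset (ZMod N)) ∩
        ((Finset.univ \ (Finset.univ : Finset (ZMod N))).image (· + 1))).Nonempty then 0
      else RR (Finset.univ : Finset (ZMod N))
        ((Finset.univ \ (Finset.univ : Finset (ZMod N))).image (· + 1))) =
      ∏ j : ZMod N, pl j := by
    rw [if_neg (by simp), Finset.sdiff_self, Finset.image_empty]
    simp [RR]
  rw [hempty, huniv]


end GHZaux

/-- (GHZ sculpting operator generates the `N`-partite GHZ state.)  Applying
`∏_{j ∈ ZMod N} (a_{j,0} − a_{j+1,1})` to `∏_j X_{j,+} X_{j,−}` yields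
`∏_j a†_{j,0}·1 + ∏_j a†_{j,1}·1 = 2^{−N/2}·[∏_j (X_{j,+}+X_{j,−}) + ∏_j (X_{j,+}−X_{j,−})]`,
which encodes the `N`-qubit GHZ state `|0…0⟩ + |1…1⟩`. -/
theorem sculpting_GHZ_state (N : ℕ) (hN : 2 ≤ N) [NeZero N] :
    (Finset.univ.noncommProd (fun j : ZMod N => sculptGHZ N j)
        (fun j _ k _ _ => sculptGHZ_commute N j k))
      (∏ j : ZMod N, (X ((j, 0) : ZMod N × Fin 2) * X ((j, 1) : ZMod N × Fin 2))) =
      ((∏ j : ZMod N, (Real.sqrt 2 : ℂ)⁻¹ •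
          (X ((j, 0) : ZMod N × Fin 2) + X ((j, 1) : ZMod N × Fin 2))) +
        ∏ j : ZMod N, (Real.sqrt 2 : ℂ)⁻¹ •
          (X ((j, 0) : ZMod N × Fin 2) - X ((j, 1) : ZMod N × Fin 2))) ∧
    (∏ j : ZMod N, (Real.sqrt 2 : ℂ)⁻¹ •
          ((X ((j, 0) : ZMod N × Fin 2) : MvPolynomial (ZMod N × Fin 2) ℂ) +
            X ((j, 1) : ZMod N × Fin 2))) +
        (∏ j : ZMod N, (Real.sqrt 2 : ℂ)⁻¹ •
          ((X ((j, 0) : ZMod N × Fin 2) : MvPolynomial (ZMod N × Fin 2) ℂ) -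
            X ((j, 1) : ZMod N × Fin 2))) =
      (((Real.sqrt 2 : ℂ) ^ N)⁻¹ •
        ((∏ j : ZMod N, (X ((j, 0) : ZMod N × Fin 2) + X ((j, 1) : ZMod N × Fin 2))) +
          ∏ j : ZMod N, (X ((j, 0) : ZMod N × Fin 2) - X ((j, 1) : ZMod N × Fin 2)))) := by
  have hk := GHZaux.key N
  constructor
  · refine hk.trans ?_
    rw [GHZaux.prod_smul_alg, GHZaux.prod_smul_alg, smul_add]
    exact add_comm _ _
  · rw [GHZaux.prod_smul_alg, GHZaux.prod_smul_alg, ← smul_add, inv_pow]
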